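/- Under the conditions of the previous setup, the mean squared error of the submodel estimator can be written as mse_S = (σ²/n){x0ᵀ Σ_n⁻¹ x0 + n(ω_Sᵀ β_{Sc})²/σ² − ω_Sᵀ Q_S ω_S}, where Q_S = (Σ11,S − Σ10,S Σ00,S⁻¹ Σ01,S)⁻¹. -/

import Mathlib

open Matrix MeasureTheory ProbabilityTheory

private lemma dp_mv' {α β : Type*} [Fintype α] [Fintype β] (M : Matrix α β ℝ) (v : α → ℝ)
    (w : β → ℝ) : v ⬝ᵥ M *ᵥ w = (Mᵀ *ᵥ v) ⬝ᵥ w := by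
  rw [Matrix.dotProduct_mulVec, Matrix.mulVec_transpose]

private lemma integral_sq_const_add' {Ω : Type*} [MeasureSpace Ω] (P : Measure Ω)
    [IsProbabilityMeasure P]
    {n : ℕ} (ε : Fin n → Ω → ℝ) (hL2 : ∀ i, MemLp (ε i) 2 P)
    (hindep : iIndepFun ε P)
    (hmean : ∀ i, ∫ ω, ε i ω ∂P = 0) (σ : ℝ) (hvar : ∀ i, ∫ ω, (ε i ω) ^ 2 ∂P = σ ^ 2)
    (a : Fin n → ℝ) (c : ℝ) :
    ∫ ω, (c + ∑ i, a i * ε i ω) ^ 2 ∂P = c ^ 2 + σ ^ 2 * ∑ i, (a i) ^ 2 := by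
  have hInt : ∀ i, Integrable (ε i) P := fun i => (hL2 i).integrable one_le_two
  have hIntm : ∀ i j, Integrable (fun ω => ε i ω * ε j ω) P := by
    intro i j
    rcases eq_or_ne i j with rfl | hij
    · simpa [pow_two] using
        (memLp_two_iff_integrable_sq (hL2 i).aestronglyMeasurable).mp (hL2 i)
    · exact (hindep.indepFun hij).integrable_mul (hInt i) (hInt j)
  have hcov : ∀ i j, ∫ ω, ε i ω * ε j ω ∂P = if i = j then σ ^ 2 else 0 := by
    intro i j
    rcases eq_or_ne i j with rfl | hij
    · simp [← hvar i, pow_two]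
    · rw [if_neg hij]
      have h := (hindep.indepFun hij).integral_fun_mul_eq_mul_integral (hInt i).aestronglyMeasurable (hInt j).aestronglyMeasurable
      have h2 : ∫ ω, ε i ω * ε j ω ∂P = (∫ ω, ε i ω ∂P) * ∫ ω, ε j ω ∂P := h
      rw [h2, hmean i, zero_mul]
  have hexp : ∀ ω, (c + ∑ i, a i * ε i ω) ^ 2
      = c ^ 2 + (∑ i, (2 * c * a i) * ε i ω)
        + ∑ i, ∑ j, (a i * a j) * (ε i ω * ε j ω) := by
    intro ω
    rw [add_sq, sq (∑ i, a i * ε i ω), Finset.sum_mul_sum, Finset.mul_sum]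
    congr 1
    · congr 1
      exact Finset.sum_congr rfl fun i _ => by ring
    · exact Finset.sum_congr rfl fun i _ => Finset.sum_congr rfl fun j _ => by ring
  have hA : Integrable (fun ω => ∑ i, (2 * c * a i) * ε i ω) P :=
    integrable_finset_sum _ fun i _ => (hInt i).const_mul _
  have hB : Integrable (fun ω => ∑ i, ∑ j, (a i * a j) * (ε i ω * ε j ω)) P :=
    integrable_finset_sum _ fun i _ =>
      integrable_finset_sum _ fun j _ => (hIntm i j).const_mul _
  have hC : Integrable (fun _ : Ω => c ^ 2) P := integrable_const _
  have hCA : Integrable (fun ω => c ^ 2 + ∑ i, (2 * c * a i) * ε i ω) P := hC.add hA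
  simp only [hexp]
  rw [integral_add hCA hB, integral_add hC hA, integral_const]
  have hAint : ∫ ω, ∑ i, (2 * c * a i) * ε i ω ∂P = 0 := by
    rw [integral_finset_sum _ fun i _ => (hInt i).const_mul _]
    simp [integral_const_mul, hmean]
  have hBint : ∫ ω, ∑ i, ∑ j, (a i * a j) * (ε i ω * ε j ω) ∂P
      = σ ^ 2 * ∑ i, (a i) ^ 2 := by
    rw [integral_finset_sum _ fun i _ =>
      integrable_finset_sum _ fun j _ => (hIntm i j).const_mul _]
    have h3 : ∀ i, ∫ ω, ∑ j, (a i * a j) * (ε i ω * ε j ω) ∂P = σ ^ 2 * (a i) ^ 2 := by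
      intro i
      rw [integral_finset_sum _ fun j _ => (hIntm i j).const_mul _]
      simp only [integral_const_mul, hcov]
      simp [Finset.sum_ite_eq, mul_ite]
      ring
    simp only [h3, ← Finset.mul_sum]
  rw [hAint, hBint]
  simp

private lemma schur_dot' {α γ : Type*} [Fintype α] [Fintype γ] [DecidableEq α] [DecidableEq γ]
    (S00 : Matrix α α ℝ) (S01 : Matrix α γ ℝ) (S10 : Matrix γ α ℝ) (S11 : Matrix γ γ ℝ)
    (h00 : IsUnit S00.det) (hsym : S00ᵀ = S00) (hS01 : S01 = S10ᵀ)
    (Q : Matrix γ γ ℝ) (hQ : Q = (S11 - S10 * S00⁻¹ * S01)⁻¹)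
    (hsc : IsUnit (S11 - S10 * S00⁻¹ * S01).det)
    (x0S : α → ℝ) (x0Sc : γ → ℝ) :
    (Sum.elim x0S x0Sc) ⬝ᵥ (Matrix.fromBlocks S00 S01 S10 S11)⁻¹ *ᵥ (Sum.elim x0S x0Sc)
      = x0S ⬝ᵥ S00⁻¹ *ᵥ x0S
        + (S10 *ᵥ (S00⁻¹ *ᵥ x0S) - x0Sc) ⬝ᵥ Q *ᵥ (S10 *ᵥ (S00⁻¹ *ᵥ x0S) - x0Sc) := by
  have hinvsym : (S00⁻¹)ᵀ = S00⁻¹ := by rw [Matrix.transpose_nonsing_inv, hsym]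
  haveI iA : Invertible S00 := S00.invertibleOfIsUnitDet h00
  have hiA : ⅟S00 = S00⁻¹ := Matrix.invOf_eq_nonsing_inv S00
  haveI iE : Invertible (S11 - S10 * ⅟S00 * S01) := by
    rw [hiA]; exact (S11 - S10 * S00⁻¹ * S01).invertibleOfIsUnitDet hsc
  haveI iSg : Invertible (Matrix.fromBlocks S00 S01 S10 S11) :=
    Matrix.fromBlocks₁₁Invertible S00 S01 S10 S11
  have hSginv : (Matrix.fromBlocks S00 S01 S10 S11)⁻¹
      = Matrix.fromBlocks (S00⁻¹ + S00⁻¹ * S01 * Q * S10 * S00⁻¹) (-(S00⁻¹ * S01 * Q))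
          (-(Q * S10 * S00⁻¹)) Q := by
    rw [← Matrix.invOf_eq_nonsing_inv, Matrix.invOf_fromBlocks₁₁_eq]
    simp only [Matrix.invOf_eq_nonsing_inv]
    rw [← hQ]
  set v : α → ℝ := S00⁻¹ *ᵥ x0S with hv
  set u : γ → ℝ := S10 *ᵥ (S00⁻¹ *ᵥ x0S) with hu
  have t2 : x0S ⬝ᵥ (S00⁻¹ * S01 * Q * S10 * S00⁻¹) *ᵥ x0S = u ⬝ᵥ Q *ᵥ u := by
    rw [← Matrix.mulVec_mulVec, ← Matrix.mulVec_mulVec, ← Matrix.mulVec_mulVec,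
        ← Matrix.mulVec_mulVec, dp_mv' S00⁻¹, hinvsym, dp_mv' S01, hS01,
        Matrix.transpose_transpose]
  have t3 : x0S ⬝ᵥ (S00⁻¹ * S01 * Q) *ᵥ x0Sc = u ⬝ᵥ Q *ᵥ x0Sc := by
    rw [← Matrix.mulVec_mulVec, ← Matrix.mulVec_mulVec, dp_mv' S00⁻¹, hinvsym,
        dp_mv' S01, hS01, Matrix.transpose_transpose]
  have t4 : x0Sc ⬝ᵥ (Q * S10 * S00⁻¹) *ᵥ x0S = x0Sc ⬝ᵥ Q *ᵥ u := by
    rw [← Matrix.mulVec_mulVec, ← Matrix.mulVec_mulVec]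
  rw [hSginv, Matrix.fromBlocks_mulVec]
  simp only [Sum.elim_comp_inl, Sum.elim_comp_inr]
  rw [sumElim_dotProduct_sumElim]
  simp only [Matrix.add_mulVec, Matrix.neg_mulVec, dotProduct_add, dotProduct_neg]
  rw [t2, t3, t4]
  simp only [Matrix.mulVec_sub, sub_dotProduct, dotProduct_sub]
  ring

/-- In the linear regression model with i.i.d. mean-zero variance-`σ²` errors,
the mean squared error of `μ̂_S = x_{0,S}ᵀ β̂_S` as an estimator of `μ = x0ᵀ β`
can be written as
`(σ²/n){x0ᵀ Σ_n⁻¹ x0 + n (ω_Sᵀ β_{Sc})²/σ² − ω_Sᵀ Q_S ω_S}`,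
where `Q_S` is the inverse Schur complement. -/
theorem submodel_estimator_mse_schur_form
    {α γ : Type*} [Fintype α] [Fintype γ] [DecidableEq α] [DecidableEq γ]
    {Ω : Type*} [MeasureSpace Ω] (P : Measure Ω) [IsProbabilityMeasure P]
    (n : ℕ) (hn : 0 < n)
    (x : Fin n → (α ⊕ γ) → ℝ) (βv : (α ⊕ γ) → ℝ)
    (βSc : γ → ℝ) (hβSc : βSc = fun c => βv (Sum.inr c))
    (σ : ℝ) (hσ : 0 < σ)
    (ε : Fin n → Ω → ℝ)
    (hmeas : ∀ i, Measurable (ε i))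
    (hL2 : ∀ i, MemLp (ε i) 2 P)
    (hindep : iIndepFun ε P)
    (hident : ∀ i j, IdentDistrib (ε i) (ε j) P P)
    (hmean : ∀ i, ∫ ω, ε i ω ∂P = 0)
    (hvar : ∀ i, ∫ ω, (ε i ω) ^ 2 ∂P = σ ^ 2)
    (y : Fin n → Ω → ℝ) (hy : ∀ i ω, y i ω = x i ⬝ᵥ βv + ε i ω)
    (S00 : Matrix α α ℝ)
    (hS00 : S00 = Matrix.of fun a b => (n : ℝ)⁻¹ * ∑ i, x i (Sum.inl a) * x i (Sum.inl b))
    (S10 : Matrix γ α ℝ)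
    (hS10 : S10 = Matrix.of fun c a => (n : ℝ)⁻¹ * ∑ i, x i (Sum.inr c) * x i (Sum.inl a))
    (h00 : IsUnit S00.det)
    (βhatS : Ω → α → ℝ)
    (hβhat : ∀ ω, βhatS ω
      = S00⁻¹.mulVec (fun a => (n : ℝ)⁻¹ * ∑ i, x i (Sum.inl a) * y i ω))
    (x0 : (α ⊕ γ) → ℝ) (x0S : α → ℝ) (x0Sc : γ → ℝ)
    (hx0S : x0S = fun a => x0 (Sum.inl a)) (hx0Sc : x0Sc = fun c => x0 (Sum.inr c))
    (ωS : γ → ℝ) (hωS : ωS = S10.mulVec (S00⁻¹.mulVec x0S) - x0Sc)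
    (μhatS : Ω → ℝ) (hμhat : ∀ ω, μhatS ω = x0S ⬝ᵥ βhatS ω)
    (μ : ℝ) (hμ : μ = x0 ⬝ᵥ βv)
    (S01 : Matrix α γ ℝ) (hS01 : S01 = S10ᵀ)
    (S11 : Matrix γ γ ℝ)
    (hS11 : S11 = Matrix.of fun c d => (n : ℝ)⁻¹ * ∑ i, x i (Sum.inr c) * x i (Sum.inr d))
    (Sg : Matrix (α ⊕ γ) (α ⊕ γ) ℝ)
    (hSg : Sg = Matrix.fromBlocks S00 S01 S10 S11) (hpd : Sg.PosDef)
    (Q : Matrix γ γ ℝ) (hQ : Q = (S11 - S10 * S00⁻¹ * S01)⁻¹)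
    (hschur : (S11 - S10 * S00⁻¹ * S01).PosDef) :
    ∫ ω, (μhatS ω - μ) ^ 2 ∂P
      = σ ^ 2 / n * (x0 ⬝ᵥ Sg⁻¹.mulVec x0
          + n * (ωS ⬝ᵥ βSc) ^ 2 / σ ^ 2 - ωS ⬝ᵥ Q.mulVec ωS) := by
  have hnR : (n : ℝ) ≠ 0 := Nat.cast_ne_zero.mpr hn.ne'
  have hσ2 : σ ^ 2 ≠ 0 := pow_ne_zero _ hσ.ne'
  have hsym : S00ᵀ = S00 := by
    rw [hS00]; ext a b
    simp only [Matrix.transpose_apply, Matrix.of_apply]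
    congr 1
    exact Finset.sum_congr rfl fun i _ => mul_comm _ _
  have hinvsym : (S00⁻¹)ᵀ = S00⁻¹ := by rw [Matrix.transpose_nonsing_inv, hsym]
  set v : α → ℝ := S00⁻¹ *ᵥ x0S with hv
  set u : γ → ℝ := S10 *ᵥ v with hu
  have hS00v : S00 *ᵥ v = x0S := by
    rw [hv, Matrix.mulVec_mulVec, Matrix.mul_nonsing_inv _ h00, Matrix.one_mulVec]
  set a : Fin n → ℝ := fun i => (n : ℝ)⁻¹ * ∑ b, v b * x i (Sum.inl b) with ha
  have ha' : ∀ i, a i = (n : ℝ)⁻¹ * ∑ b, v b * x i (Sum.inl b) := fun i => rfl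
  have hentry : ∀ p q, S00 p q = S00 q p := fun p q => by
    conv_lhs => rw [← hsym, Matrix.transpose_apply]
  -- key fact: ∑ i, a i * x i k = (x0S, u) at coordinate k
  have hax : ∀ k, ∑ i, a i * x i k = Sum.elim x0S u k := by
    intro k
    have step : ∑ i, a i * x i k
        = ∑ b, v b * ((n : ℝ)⁻¹ * ∑ i, x i (Sum.inl b) * x i k) := by
      simp only [ha', Finset.sum_mul, Finset.mul_sum]
      rw [Finset.sum_comm]
      exact Finset.sum_congr rfl fun b _ => Finset.sum_congr rfl fun i _ => by ring
    rw [step]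
    cases k with
    | inl b' =>
      have h1 : ∀ b, (n : ℝ)⁻¹ * ∑ i, x i (Sum.inl b) * x i (Sum.inl b') = S00 b b' := by
        intro b; rw [hS00]; rfl
      simp only [h1, Sum.elim_inl]
      rw [← hS00v]
      simp only [Matrix.mulVec, dotProduct]
      exact Finset.sum_congr rfl fun b _ => by rw [hentry b b']; ring
    | inr c =>
      have h1 : ∀ b, (n : ℝ)⁻¹ * ∑ i, x i (Sum.inl b) * x i (Sum.inr c) = S10 c b := by
        intro b; rw [hS10]
        simp only [Matrix.of_apply]
        congr 1
        exact Finset.sum_congr rfl fun i _ => mul_comm _ _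
      simp only [h1, Sum.elim_inr, hu]
      simp only [Matrix.mulVec, dotProduct]
      exact Finset.sum_congr rfl fun b _ => mul_comm _ _
  -- sum of squares of coefficients
  have hsumsq : ∑ i, a i ^ 2 = (n : ℝ)⁻¹ * (x0S ⬝ᵥ v) := by
    have e1 : ∀ i, a i ^ 2 = (n : ℝ)⁻¹ * ∑ b, (a i * x i (Sum.inl b)) * v b := by
      intro i
      rw [pow_two]
      nth_rewrite 2 [ha' i]
      simp only [Finset.mul_sum]
      exact Finset.sum_congr rfl fun b _ => by ring
    simp only [e1, ← Finset.mul_sum]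
    congr 1
    rw [Finset.sum_comm]
    simp only [dotProduct]
    refine Finset.sum_congr rfl fun b _ => ?_
    rw [← Finset.sum_mul, hax (Sum.inl b), Sum.elim_inl]
  have hx0e : x0 = Sum.elim x0S x0Sc := by
    funext k; cases k with
    | inl b => rw [Sum.elim_inl, hx0S]
    | inr c => rw [Sum.elim_inr, hx0Sc]
  -- pointwise decomposition of the error
  have hpt : ∀ ω, μhatS ω - μ = ωS ⬝ᵥ βSc + ∑ i, a i * ε i ω := by
    intro ω
    have h1 : μhatS ω = ∑ i, a i * y i ω := by
      rw [hμhat, hβhat, dp_mv', hinvsym, ← hv]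
      simp only [dotProduct, Finset.mul_sum]
      rw [Finset.sum_comm]
      refine Finset.sum_congr rfl fun i _ => ?_
      rw [ha' i]
      simp only [Finset.mul_sum, Finset.sum_mul]
      exact Finset.sum_congr rfl fun b _ => by ring
    have h2 : ∑ i, a i * y i ω
        = (∑ i, a i * (x i ⬝ᵥ βv)) + ∑ i, a i * ε i ω := by
      rw [← Finset.sum_add_distrib]
      exact Finset.sum_congr rfl fun i _ => by rw [hy i ω]; ring
    have h3 : ∑ i, a i * (x i ⬝ᵥ βv) = ∑ k, Sum.elim x0S u k * βv k := by
      simp only [dotProduct, Finset.mul_sum]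
      rw [Finset.sum_comm]
      refine Finset.sum_congr rfl fun k _ => ?_
      rw [← hax k, Finset.sum_mul]
      exact Finset.sum_congr rfl fun i _ => by ring
    have h4 : ∑ k, Sum.elim x0S u k * βv k
        = (∑ b, x0S b * βv (Sum.inl b)) + ∑ c, u c * βv (Sum.inr c) := by
      rw [Fintype.sum_sum_type]
      simp
    have h5 : μ = (∑ b, x0S b * βv (Sum.inl b)) + ∑ c, x0Sc c * βv (Sum.inr c) := by
      rw [hμ, hx0e, dotProduct, Fintype.sum_sum_type]
      simp
    have h6 : ωS ⬝ᵥ βSc = (∑ c, u c * βv (Sum.inr c)) - ∑ c, x0Sc c * βv (Sum.inr c) := by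
      rw [hωS, sub_dotProduct, hβSc]
      rfl
    rw [h1, h2, h3, h4, h5, h6]
    ring
  -- compute the integral
  have hL : ∫ ω, (μhatS ω - μ) ^ 2 ∂P
      = (ωS ⬝ᵥ βSc) ^ 2 + σ ^ 2 * ∑ i, a i ^ 2 := by
    rw [show (fun ω => (μhatS ω - μ) ^ 2)
        = fun ω => (ωS ⬝ᵥ βSc + ∑ i, a i * ε i ω) ^ 2 from funext fun ω => by rw [hpt ω]]
    exact integral_sq_const_add' P ε hL2 hindep hmean σ hvar a _
  -- Schur complement identity
  have hSchur : x0 ⬝ᵥ Sg⁻¹ *ᵥ x0 = x0S ⬝ᵥ v + ωS ⬝ᵥ Q *ᵥ ωS := by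
    rw [hx0e, hSg, hωS]
    exact schur_dot' S00 S01 S10 S11 h00 hsym hS01 Q hQ hschur.det_pos.ne'.isUnit x0S x0Sc
  rw [hL, hsumsq, hSchur]
  field_simp
  ring
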